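/- For Model 1 in dimension d = 1 with i.i.d. N(0,1) weights: if B_{N/2}^N is the event that every directed path γ starting at a point of Ξ_{2^{N/2+1}}([−2^{N/2+1}, 2^{N/2+1}]) and ending at level 2^N satisfies V(γ) ≤ (μ + ε)2^N, then lim_{N→∞} P(B_{N/2}^N) = 1. -/

import Mathlib

/-!
Model 1 (directed last passage percolation, d = 1).  Edges are indexed by
`(x, m, b) : ℤ × ℕ × Bool`, representing the directed edge from the vertex
`(x, m)` to `(x + (if b then 1 else -1), m + 1)`.
-/

open MeasureTheory ProbabilityTheory Filter

namespace Stmt12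

/-- Position of a directed path after `k` steps, starting at `x`,
with step signs `s`. -/
def pos (x : ℤ) (s : ℕ → Bool) : ℕ → ℤ
  | 0 => x
  | k + 1 => pos x s k + (if s k then 1 else -1)

/-- Value `V(γ)` of the directed path starting at `(x, m)`, taking `n` steps
according to `s`, in the edge-weight realization `Y`. -/
noncomputable def pathVal (Y : ℤ × ℕ × Bool → ℝ) (x : ℤ) (m : ℕ) (s : ℕ → Bool) (n : ℕ) : ℝ :=
  ∑ k ∈ Finset.range n, Y (pos x s k, m + k, s k)

/-- Last passage time `Z_n` from the origin to level `n`. -/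
noncomputable def Z (Y : ℤ × ℕ × Bool → ℝ) (n : ℕ) : ℝ :=
  ⨆ s : ℕ → Bool, pathVal Y 0 0 s n

/-- The event `B_{N/2}^N`: every directed path `γ` starting at a point of
`Ξ_{2^{N/2+1}}([-2^{N/2+1}, 2^{N/2+1}])` and ending at level `2^N` satisfies
`V(γ) ≤ (μ + ε) 2^N`. -/
def Bevent (X : ℤ × ℕ × Bool → Ω → ℝ) (μ ε : ℝ) (N : ℕ) : Set Ω :=
  {ω | ∀ x : ℤ, |x| ≤ (2 ^ (N / 2 + 1) : ℤ) → (x + (2 ^ (N / 2 + 1) : ℤ)) % 2 = 0 →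
    ∀ s : ℕ → Bool,
      pathVal (fun e => X e ω) x (2 ^ (N / 2 + 1)) s (2 ^ N - 2 ^ (N / 2 + 1)) ≤
        (μ + ε) * 2 ^ N}

end Stmt12

open Stmt12

namespace Aux12

/-! ### Gaussian computations -/

lemma gauss_exp_eq (t : ℝ) : ∀ x : ℝ, Real.exp (t * x) * gaussianPDFReal 0 1 x
    = Real.exp (t ^ 2 / 2) * gaussianPDFReal t 1 x := by
  intro x
  simp only [gaussianPDFReal_def, NNReal.coe_one, mul_one]
  rw [show Real.exp (t * x) * ((Real.sqrt (2 * Real.pi))⁻¹ * Real.exp (-(x - 0) ^ 2 / 2))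
      = (Real.sqrt (2 * Real.pi))⁻¹ * Real.exp (-(x - 0) ^ 2 / 2 + t * x) by
        rw [Real.exp_add]; ring,
    show Real.exp (t ^ 2 / 2) * ((Real.sqrt (2 * Real.pi))⁻¹ * Real.exp (-(x - t) ^ 2 / 2))
      = (Real.sqrt (2 * Real.pi))⁻¹ * Real.exp (-(x - t) ^ 2 / 2 + t ^ 2 / 2) by
        rw [Real.exp_add]; ring]
  congr 1
  ring

lemma gauss_integrable (t : ℝ) :
    Integrable (fun x => Real.exp (t * x)) (gaussianReal 0 1) := by
  rw [gaussianReal_of_var_ne_zero 0 one_ne_zero]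
  rw [integrable_withDensity_iff (measurable_gaussianPDF 0 1)
    (Filter.Eventually.of_forall fun x => ENNReal.ofReal_lt_top)]
  have : (fun x => Real.exp (t * x) * (gaussianPDF 0 1 x).toReal)
      = fun x => Real.exp (t ^ 2 / 2) * gaussianPDFReal t 1 x := by
    funext x
    rw [gaussianPDF_def]
    simp only [ENNReal.toReal_ofReal (gaussianPDFReal_nonneg 0 1 x)]
    exact gauss_exp_eq t x
  rw [this]
  exact (integrable_gaussianPDFReal t 1).const_mul _

lemma gauss_integral (t : ℝ) :
    ∫ x, Real.exp (t * x) ∂(gaussianReal 0 1) = Real.exp (t ^ 2 / 2) := by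
  rw [gaussianReal_of_var_ne_zero 0 one_ne_zero]
  have hd : (gaussianPDF 0 1) = fun x => ((gaussianPDFReal 0 1 x).toNNReal : ENNReal) := by
    funext x; rw [gaussianPDF_def]; rfl
  rw [hd, integral_withDensity_eq_integral_smul
    ((measurable_gaussianPDFReal 0 1).real_toNNReal)]
  have : (fun x => (Real.toNNReal (gaussianPDFReal 0 1 x)) • Real.exp (t * x))
      = fun x => Real.exp (t ^ 2 / 2) * gaussianPDFReal t 1 x := by
    funext x
    rw [NNReal.smul_def, smul_eq_mul, Real.coe_toNNReal _ (gaussianPDFReal_nonneg 0 1 x),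
      mul_comm]
    exact gauss_exp_eq t x
  rw [this, integral_const_mul, integral_gaussianPDFReal_eq_one t one_ne_zero, mul_one]

/-! ### Path combinatorics -/

/-- extend a finite step sequence by `false`s -/
def ext {n : ℕ} (t : Fin n → Bool) : ℕ → Bool :=
  fun k => if h : k < n then t ⟨k, h⟩ else false

lemma pos_congr {x : ℤ} {s s' : ℕ → Bool} {k : ℕ} (h : ∀ j, j < k → s j = s' j) :
    pos x s k = pos x s' k := by
  induction k with
  | zero => rfl
  | succ k ih =>
    rw [pos, pos, ih fun j hj => h j (hj.trans (Nat.lt_succ_self k)),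
      h k (Nat.lt_succ_self k)]

lemma pathVal_congr {Y : ℤ × ℕ × Bool → ℝ} {x : ℤ} {m : ℕ} {s s' : ℕ → Bool} {n : ℕ}
    (h : ∀ j, j < n → s j = s' j) : pathVal Y x m s n = pathVal Y x m s' n := by
  refine Finset.sum_congr rfl fun k hk => ?_
  rw [Finset.mem_range] at hk
  rw [pos_congr fun j hj => h j (hj.trans hk), h k hk]

lemma pathVal_eq_ext (Y : ℤ × ℕ × Bool → ℝ) (x : ℤ) (m : ℕ) (s : ℕ → Bool) (n : ℕ) :
    pathVal Y x m s n = pathVal Y x m (ext fun i : Fin n => s i) n :=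
  pathVal_congr fun j hj => by simp [ext, hj]

lemma bddAbove_pathVal (Y : ℤ × ℕ × Bool → ℝ) (x : ℤ) (m : ℕ) (n : ℕ) :
    BddAbove (Set.range fun s : ℕ → Bool => pathVal Y x m s n) := by
  refine BddAbove.mono ?_
    (Set.Finite.bddAbove (Set.finite_range fun t : Fin n → Bool => pathVal Y x m (ext t) n))
  rintro r ⟨s, rfl⟩
  exact ⟨fun i : Fin n => s i, (pathVal_eq_ext Y x m s n).symm⟩

lemma Z_eq (Y : ℤ × ℕ × Bool → ℝ) (n : ℕ) :
    Z Y n = ⨆ t : Fin n → Bool, pathVal Y 0 0 (ext t) n := by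
  apply le_antisymm
  · refine ciSup_le fun s => ?_
    rw [pathVal_eq_ext Y 0 0 s n]
    exact le_ciSup (f := fun t : Fin n → Bool => pathVal Y 0 0 (ext t) n)
      (Set.Finite.bddAbove (Set.finite_range _)) (fun i : Fin n => s i)
  · refine ciSup_le fun t => ?_
    exact le_ciSup (bddAbove_pathVal Y 0 0 n) (ext t)

lemma pathVal_le_Z (Y : ℤ × ℕ × Bool → ℝ) (s : ℕ → Bool) (n : ℕ) :
    pathVal Y 0 0 s n ≤ Z Y n :=
  le_ciSup (bddAbove_pathVal Y 0 0 n) s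

lemma pos_add (x : ℤ) (s : ℕ → Bool) (a b : ℕ) :
    pos x s (a + b) = pos (pos x s a) (fun k => s (a + k)) b := by
  induction b with
  | zero => rfl
  | succ b ih => rw [← Nat.add_assoc, pos, pos, ih]

lemma pathVal_add (Y : ℤ × ℕ × Bool → ℝ) (x : ℤ) (m : ℕ) (s : ℕ → Bool) (a b : ℕ) :
    pathVal Y x m s (a + b)
      = pathVal Y x m s a + pathVal Y (pos x s a) (m + a) (fun k => s (a + k)) b := by
  rw [pathVal, Finset.sum_range_add]
  congr 1
  refine Finset.sum_congr rfl fun k _ => ?_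
  rw [pos_add, Nat.add_assoc]

/-- construction of a path from the origin to `(x, m)` -/
lemma exists_pos_eq {m : ℕ} {x : ℤ} (h1 : |x| ≤ (m : ℤ)) (h2 : (x + m) % 2 = 0) :
    ∃ t : ℕ → Bool, pos 0 t m = x := by
  set j : ℤ := (x + m) / 2 with hj
  have h2j : 2 * j = x + m := by omega
  have hj0 : 0 ≤ j := by rw [abs_le] at h1; omega
  have hjm : j ≤ m := by rw [abs_le] at h1; omega
  refine ⟨fun k => decide ((k : ℤ) < j), ?_⟩
  have key : ∀ k : ℕ, (k : ℤ) ≤ m →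
      pos 0 (fun k => decide ((k : ℤ) < j)) k = if (k : ℤ) ≤ j then (k : ℤ) else 2 * j - k := by
    intro k
    induction k with
    | zero => intro _; simp [pos, hj0]
    | succ k ih =>
      intro hk
      have hk' : (k : ℤ) ≤ m := by push_cast at hk ⊢; omega
      rw [pos, ih hk']
      have hd : (if decide ((k : ℤ) < j) = true then (1 : ℤ) else -1)
          = if (k : ℤ) < j then 1 else -1 := by simp
      rw [hd]
      push_cast
      split_ifs <;> omega
  rw [key m le_rfl]
  by_cases h : (m : ℤ) ≤ j
  · rw [if_pos h]; omega
  · rw [if_neg h]; omega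

/-! ### Probabilistic lemmas -/

section Prob
variable {Ω : Type} [MeasurableSpace Ω] (P : Measure Ω) [IsProbabilityMeasure P]
  (X : ℤ × ℕ × Bool → Ω → ℝ)

lemma measurable_pathVal (hmeas : ∀ e, Measurable (X e)) (x : ℤ) (m : ℕ) (s : ℕ → Bool)
    (n : ℕ) : Measurable (fun ω => pathVal (fun e => X e ω) x m s n) := by
  unfold pathVal
  exact Finset.measurable_sum _ fun k _ => hmeas _

lemma measurable_Z (hmeas : ∀ e, Measurable (X e)) (n : ℕ) :
    Measurable (fun ω => Z (fun e => X e ω) n) := by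
  have h : (fun ω => Z (fun e => X e ω) n)
      = fun ω => Finset.univ.sup' Finset.univ_nonempty
          (fun t : Fin n → Bool => pathVal (fun e => X e ω) 0 0 (ext t) n) := by
    funext ω
    rw [Z_eq, ← Finset.sup'_univ_eq_ciSup]
  have h2 : (fun ω => Finset.univ.sup' Finset.univ_nonempty
        (fun t : Fin n → Bool => pathVal (fun e => X e ω) 0 0 (ext t) n))
      = Finset.univ.sup' Finset.univ_nonempty
        (fun (t : Fin n → Bool) ω => pathVal (fun e => X e ω) 0 0 (ext t) n) := by
    funext ω
    rw [Finset.sup'_apply]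
  rw [h, h2]
  exact Finset.measurable_sup' _ fun t _ => measurable_pathVal X hmeas 0 0 (ext t) n

variable (hmeas : ∀ e, Measurable (X e))
  (hindep : iIndepFun X P)
  (hdist : ∀ e, Measure.map (X e) P = gaussianReal 0 1)

include hmeas hdist in
omit [IsProbabilityMeasure P] in
lemma integrable_exp_X (e : ℤ × ℕ × Bool) (t : ℝ) :
    Integrable (fun ω => Real.exp (t * X e ω)) P := by
  have h := gauss_integrable t
  rw [← hdist e] at h
  have := (integrable_map_measure
    ((show Measurable fun x : ℝ => Real.exp (t * x) by fun_prop).aestronglyMeasurable)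
    (hmeas e).aemeasurable).mp h
  exact this

include hmeas hdist in
omit [IsProbabilityMeasure P] in
lemma mgf_X (e : ℤ × ℕ × Bool) (t : ℝ) : mgf (X e) P t = Real.exp (t ^ 2 / 2) := by
  have hg : Measurable fun x : ℝ => Real.exp (t * x) := by fun_prop
  have h1 : ∫ y, Real.exp (t * y) ∂(Measure.map (X e) P) = ∫ ω, Real.exp (t * X e ω) ∂P :=
    integral_map (hmeas e).aemeasurable hg.aestronglyMeasurable
  rw [hdist e] at h1
  have h0 : mgf (X e) P t = ∫ ω, Real.exp (t * X e ω) ∂P := rfl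
  rw [h0, ← h1]
  exact gauss_integral t

include hmeas hindep hdist in
lemma chernoff_path (m : ℕ) (u : ℕ → Bool) (c : ℝ) :
    P {ω | pathVal (fun e => X e ω) 0 0 u m ≤ -c}
      ≤ ENNReal.ofReal (Real.exp ((m : ℝ) / 2 - c)) := by
  classical
  set edge : ℕ → ℤ × ℕ × Bool := fun k => (pos 0 u k, 0 + k, u k) with hedge
  have hinj : Set.InjOn edge (Finset.range m) := by
    intro a _ b _ h
    have := congrArg (fun p : ℤ × ℕ × Bool => p.2.1) h
    simpa [hedge] using this
  set F : Finset (ℤ × ℕ × Bool) := (Finset.range m).image edge with hF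
  have hcard : F.card = m := by
    rw [hF, Finset.card_image_of_injOn hinj, Finset.card_range]
  have hsum : ∀ ω, (∑ e ∈ F, X e) ω = pathVal (fun e => X e ω) 0 0 u m := by
    intro ω
    rw [Finset.sum_apply, hF, Finset.sum_image (fun a ha b hb h => hinj ha hb h)]
    rfl
  have hset : {ω | pathVal (fun e => X e ω) 0 0 u m ≤ -c}
      = {ω | (∑ e ∈ F, X e) ω ≤ -c} := by
    ext ω
    rw [Set.mem_setOf_eq, Set.mem_setOf_eq, hsum ω]
  have hint : Integrable (fun ω => Real.exp ((-1) * (∑ e ∈ F, X e) ω)) P :=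
    hindep.integrable_exp_mul_sum hmeas fun e _ => integrable_exp_X P X hmeas hdist e (-1)
  have hb := measure_le_le_exp_mul_mgf (μ := P) (X := ∑ e ∈ F, X e) (-c)
    (t := -1) (by norm_num) hint
  have hmgf : mgf (∑ e ∈ F, X e) P (-1) = Real.exp ((m : ℝ) / 2) := by
    rw [hindep.mgf_sum hmeas F]
    have : ∀ e ∈ F, mgf (X e) P (-1) = Real.exp ((1 : ℝ) / 2) := by
      intro e _
      rw [mgf_X P X hmeas hdist e (-1)]
      norm_num
    rw [Finset.prod_congr rfl this, Finset.prod_const, hcard, ← Real.exp_nat_mul]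
    congr 1
    ring
  rw [hmgf] at hb
  rw [hset]
  rw [ENNReal.le_ofReal_iff_toReal_le (measure_ne_top P _) (Real.exp_pos _).le]
  refine hb.trans ?_
  rw [← Real.exp_add]
  apply le_of_eq
  congr 1
  ring

end Prob

/-! ### The deterministic inclusion -/

lemma subset_B {Ω : Type} (X : ℤ × ℕ × Bool → Ω → ℝ) (μ ε : ℝ) (N : ℕ) (hN : 2 ≤ N) (ω : Ω)
    (hD : Z (fun e => X e ω) (2 ^ N) ≤ (μ + ε / 2) * 2 ^ N)
    (hC : ∀ t : Fin (2 ^ (N / 2 + 1)) → Bool,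
      ¬ pathVal (fun e => X e ω) 0 0 (ext t) (2 ^ (N / 2 + 1)) ≤ -(ε / 2 * 2 ^ N)) :
    ω ∈ Bevent X μ ε N := by
  intro x hx hpar s
  set Y : ℤ × ℕ × Bool → ℝ := fun e => X e ω with hY
  set m : ℕ := 2 ^ (N / 2 + 1) with hm
  set n : ℕ := 2 ^ N with hn
  have hmn : m ≤ n := by
    rw [hm, hn]
    exact Nat.pow_le_pow_right (by norm_num) (by omega)
  have hcast : ((2 : ℤ) ^ (N / 2 + 1)) = ((m : ℕ) : ℤ) := by rw [hm]; push_cast; ring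
  rw [hcast] at hx hpar
  obtain ⟨t, ht⟩ := exists_pos_eq hx hpar
  set u : ℕ → Bool := fun k => if k < m then t k else s (k - m) with hu
  have hut : ∀ j, j < m → u j = t j := fun j hj => by simp [hu, hj]
  have hpos : pos 0 u m = x := by rw [pos_congr hut, ht]
  have hadd := pathVal_add Y 0 0 u m (n - m)
  rw [Nat.add_sub_cancel' hmn] at hadd
  have hshift : pathVal Y (pos 0 u m) (0 + m) (fun k => u (m + k)) (n - m)
      = pathVal Y x m s (n - m) := by
    rw [hpos, Nat.zero_add]
    refine pathVal_congr fun j _ => ?_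
    simp [hu, Nat.add_sub_cancel_left]
  rw [hshift] at hadd
  have h1 : pathVal Y 0 0 u n ≤ (μ + ε / 2) * 2 ^ N :=
    (pathVal_le_Z Y u n).trans hD
  have h2 : -(ε / 2 * 2 ^ N) < pathVal Y 0 0 u m := by
    have := hC fun i : Fin m => u i
    rw [← pathVal_eq_ext Y 0 0 u m] at this
    linarith [lt_of_not_ge this]
  have : pathVal Y x m s (n - m) = pathVal Y 0 0 u n - pathVal Y 0 0 u m := by
    rw [hadd]; ring
  rw [this]
  linarith

section Main
variable {Ω : Type} [MeasurableSpace Ω] (P : Measure Ω) [IsProbabilityMeasure P]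
  (X : ℤ × ℕ × Bool → Ω → ℝ) (μ ε : ℝ)

/-- the "good `Z`" event -/
def Dset (X : ℤ × ℕ × Bool → Ω → ℝ) (μ ε : ℝ) (N₀ : ℕ) : Set Ω :=
  ⋂ (M : ℕ), ⋂ (_ : N₀ ≤ M),
    {ω | Z (fun e => X e ω) (2 ^ M) ≤ (μ + ε / 2) * 2 ^ M}

/-- the "bad prefix" event -/
def Cbad (X : ℤ × ℕ × Bool → Ω → ℝ) (ε : ℝ) (N : ℕ) : Set Ω :=
  ⋃ t : Fin (2 ^ (N / 2 + 1)) → Bool,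
    {ω | pathVal (fun e => X e ω) 0 0 (ext t) (2 ^ (N / 2 + 1)) ≤ -(ε / 2 * 2 ^ N)}

variable (μ ε : ℝ)

lemma measurableSet_Dset (hmeas : ∀ e, Measurable (X e)) (N₀ : ℕ) :
    MeasurableSet (Dset X μ ε N₀) :=
  MeasurableSet.iInter fun M => MeasurableSet.iInter fun _ =>
    measurableSet_le (measurable_Z X hmeas _) measurable_const

lemma Dlim (hmeas : ∀ e, Measurable (X e)) (hε : 0 < ε)
    (hμ : ∀ᵐ ω ∂P, Tendsto (fun n : ℕ => Z (fun e => X e ω) n / n) atTop (nhds μ)) :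
    Tendsto (fun N => P (Dset X μ ε N)ᶜ) atTop (nhds 0) := by
  have hmono : Monotone (Dset X μ ε) := by
    intro a b hab ω hω
    simp only [Dset, Set.mem_iInter, Set.mem_setOf_eq] at hω ⊢
    exact fun M hM => hω M (hab.trans hM)
  have hnull : P (⋂ N₀, (Dset X μ ε N₀)ᶜ) = 0 := by
    refine measure_mono_null ?_ (ae_iff.mp hμ)
    intro ω hω
    simp only [Set.mem_iInter, Set.mem_compl_iff] at hω
    simp only [Set.mem_setOf_eq]
    intro hT
    have h2 : Tendsto (fun M : ℕ => Z (fun e => X e ω) (2 ^ M) / ((2 ^ M : ℕ) : ℝ))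
        atTop (nhds μ) :=
      hT.comp (tendsto_pow_atTop_atTop_of_one_lt one_lt_two)
    have h3 := h2.eventually_lt_const (show μ < μ + ε / 2 by linarith)
    obtain ⟨N₀, hN₀⟩ := eventually_atTop.mp h3
    refine hω N₀ ?_
    simp only [Dset, Set.mem_iInter, Set.mem_setOf_eq]
    intro M hM
    have h4 := hN₀ M hM
    have hpow : (0 : ℝ) < ((2 ^ M : ℕ) : ℝ) := by positivity
    rw [div_lt_iff₀ hpow] at h4
    have : ((2 ^ M : ℕ) : ℝ) = (2 : ℝ) ^ M := by push_cast; ring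
    rw [this] at h4
    linarith
  have h := tendsto_measure_iInter_atTop (μ := P) (s := fun N => (Dset X μ ε N)ᶜ)
    (fun N => ((measurableSet_Dset X μ ε hmeas N).compl).nullMeasurableSet)
    (fun a b hab => Set.compl_subset_compl.mpr (hmono hab))
    ⟨0, measure_ne_top _ _⟩
  rwa [hnull] at h

lemma Cbad_bound (hmeas : ∀ e, Measurable (X e))
    (hindep : iIndepFun X P)
    (hdist : ∀ e, Measure.map (X e) P = gaussianReal 0 1) (N : ℕ) :
    P (Cbad X ε N) ≤ ENNReal.ofReal (Real.exp
      (((2 ^ (N / 2 + 1) : ℕ) : ℝ) * Real.log 2 + ((2 ^ (N / 2 + 1) : ℕ) : ℝ) / 2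
        - ε / 2 * 2 ^ N)) := by
  classical
  set m : ℕ := 2 ^ (N / 2 + 1) with hm
  set c : ℝ := ε / 2 * 2 ^ N with hc
  have h1 : P (Cbad X ε N) ≤ ∑' t : Fin m → Bool,
      P {ω | pathVal (fun e => X e ω) 0 0 (ext t) m ≤ -c} :=
    measure_iUnion_le _
  have h2 : ∀ t : Fin m → Bool,
      P {ω | pathVal (fun e => X e ω) 0 0 (ext t) m ≤ -c}
        ≤ ENNReal.ofReal (Real.exp ((m : ℝ) / 2 - c)) := fun t =>
    chernoff_path P X hmeas hindep hdist m (ext t) c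
  have h3 : (∑' t : Fin m → Bool,
      P {ω | pathVal (fun e => X e ω) 0 0 (ext t) m ≤ -c})
        ≤ ∑' _t : Fin m → Bool, ENNReal.ofReal (Real.exp ((m : ℝ) / 2 - c)) :=
    ENNReal.tsum_le_tsum h2
  refine (h1.trans h3).trans ?_
  rw [tsum_fintype]
  rw [Finset.sum_const, Finset.card_univ]
  have hcard : Fintype.card (Fin m → Bool) = 2 ^ m := by
    simp [Fintype.card_fun]
  rw [hcard, nsmul_eq_mul]
  rw [show ((2 ^ m : ℕ) : ENNReal) = ENNReal.ofReal ((2 ^ m : ℕ) : ℝ) by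
    rw [ENNReal.ofReal_natCast]]
  rw [← ENNReal.ofReal_mul (by positivity)]
  apply ENNReal.ofReal_le_ofReal
  have h4 : ((2 ^ m : ℕ) : ℝ) = Real.exp ((m : ℝ) * Real.log 2) := by
    rw [Real.exp_nat_mul, Real.exp_log (by norm_num : (0:ℝ) < 2)]
    push_cast; ring
  rw [h4, ← Real.exp_add]
  apply le_of_eq
  congr 1
  ring

lemma tendsto_rate (hε : 0 < ε) : Tendsto (fun N : ℕ =>
    ((2 ^ (N / 2 + 1) : ℕ) : ℝ) * Real.log 2 + ((2 ^ (N / 2 + 1) : ℕ) : ℝ) / 2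
      - ε / 2 * 2 ^ N) atTop atBot := by
  set K : ℝ := Real.log 2 + 1 / 2 with hK
  have hK0 : 0 < K := by
    have := Real.log_pos (by norm_num : (1:ℝ) < 2)
    rw [hK]; linarith
  have hnat : Tendsto (fun N : ℕ => N - N / 2 - 1) atTop atTop :=
    tendsto_atTop_atTop.mpr fun b => ⟨2 * b + 4, fun a ha => by omega⟩
  have hpow : Tendsto (fun N : ℕ => (2 : ℝ) ^ (N - N / 2 - 1)) atTop atTop :=
    (tendsto_pow_atTop_atTop_of_one_lt (by norm_num : (1:ℝ) < 2)).comp hnat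
  have hev := hpow.eventually_ge_atTop (K * 4 / ε)
  have hg : Tendsto (fun N : ℕ => -(ε / 4 * 2 ^ N)) atTop atBot := by
    have h1 : Tendsto (fun N : ℕ => ε / 4 * 2 ^ N) atTop atTop :=
      (tendsto_pow_atTop_atTop_of_one_lt (by norm_num : (1:ℝ) < 2)).const_mul_atTop
        (by positivity)
    exact tendsto_neg_atTop_atBot.comp h1
  refine tendsto_atBot_mono' atTop ?_ hg
  filter_upwards [hev, eventually_ge_atTop 2] with N hN h2N
  have hexp : (N / 2 + 1) + (N - N / 2 - 1) = N := by omega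
  have hsplit : (2 : ℝ) ^ N = 2 ^ (N / 2 + 1) * 2 ^ (N - N / 2 - 1) := by
    rw [← pow_add, hexp]
  have hcast : ((2 ^ (N / 2 + 1) : ℕ) : ℝ) = (2 : ℝ) ^ (N / 2 + 1) := by push_cast; ring
  rw [hcast]
  have hKle : K ≤ ε / 4 * 2 ^ (N - N / 2 - 1) := by
    rw [div_le_iff₀ hε] at hN
    nlinarith
  have hm0 : (0 : ℝ) < 2 ^ (N / 2 + 1) := by positivity
  have hstep : (2 : ℝ) ^ (N / 2 + 1) * K ≤ ε / 4 * 2 ^ N := by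
    rw [hsplit]
    calc (2 : ℝ) ^ (N / 2 + 1) * K ≤ 2 ^ (N / 2 + 1) * (ε / 4 * 2 ^ (N - N / 2 - 1)) := by
          exact mul_le_mul_of_nonneg_left hKle hm0.le
    _ = ε / 4 * (2 ^ (N / 2 + 1) * 2 ^ (N - N / 2 - 1)) := by ring
  have hsplit' : (2:ℝ) ^ (N/2+1) * Real.log 2 + (2:ℝ) ^ (N/2+1) / 2 = 2 ^ (N/2+1) * K := by
    rw [hK]; ring
  rw [hsplit']
  nlinarith [pow_pos (show (0:ℝ) < 2 by norm_num) N]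


end Main

end Aux12

open Aux12 in
/-- Lemma 3.2.  For Model 1 in dimension `d = 1` with i.i.d.
`N(0,1)` weights, `P(B_{N/2}^N) → 1` as `N → ∞`. -/
theorem stmt_12
    {Ω : Type} [MeasurableSpace Ω] (P : Measure Ω) [IsProbabilityMeasure P]
    (X : ℤ × ℕ × Bool → Ω → ℝ)
    (hmeas : ∀ e, Measurable (X e))
    (hindep : iIndepFun X P)
    (hdist : ∀ e, Measure.map (X e) P = gaussianReal 0 1)
    (μ : ℝ)
    (hμ : ∀ᵐ ω ∂P, Tendsto (fun n : ℕ => Z (fun e => X e ω) n / n) atTop (nhds μ))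
    (ε : ℝ) (hε : 0 < ε) :
    Tendsto (fun N : ℕ => P (Bevent X μ ε N)) atTop (nhds 1) := by
  classical
  have hDlim := Dlim P X μ ε hmeas hε hμ
  have hCbound := Cbad_bound P X ε hmeas hindep hdist
  have hClim : Tendsto (fun N => P (Cbad X ε N)) atTop (nhds 0) := by
    have hupper : Tendsto (fun N : ℕ => ENNReal.ofReal (Real.exp
        (((2 ^ (N / 2 + 1) : ℕ) : ℝ) * Real.log 2 + ((2 ^ (N / 2 + 1) : ℕ) : ℝ) / 2
          - ε / 2 * 2 ^ N))) atTop (nhds 0) := by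
      have h1 := Real.tendsto_exp_atBot.comp (tendsto_rate ε hε)
      have h2 := ENNReal.tendsto_ofReal h1
      simpa using h2
    exact tendsto_of_tendsto_of_tendsto_of_le_of_le tendsto_const_nhds hupper
      (fun N => zero_le) hCbound
  have hsub : ∀ N, 2 ≤ N → (Bevent X μ ε N)ᶜ ⊆ (Dset X μ ε N)ᶜ ∪ Cbad X ε N := by
    intro N hN ω hω
    by_contra hcon
    simp only [Set.mem_union, Set.mem_compl_iff, not_or, not_not] at hcon
    obtain ⟨hD, hC⟩ := hcon
    apply hω
    refine subset_B X μ ε N hN ω ?_ ?_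
    · have := Set.mem_iInter.mp (Set.mem_iInter.mp hD N) le_rfl
      exact this
    · intro t hle
      exact hC (Set.mem_iUnion.mpr ⟨t, hle⟩)
  have hBclim : Tendsto (fun N => P (Bevent X μ ε N)ᶜ) atTop (nhds 0) := by
    have hsumlim : Tendsto (fun N => P (Dset X μ ε N)ᶜ + P (Cbad X ε N)) atTop (nhds 0) := by
      have := hDlim.add hClim
      simpa using this
    refine tendsto_of_tendsto_of_tendsto_of_le_of_le' tendsto_const_nhds hsumlim
      (Eventually.of_forall fun N => zero_le) ?_
    filter_upwards [eventually_ge_atTop 2] with N hN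
    exact (measure_mono (hsub N hN)).trans (measure_union_le _ _)
  have hlow : ∀ N, 1 - P (Bevent X μ ε N)ᶜ ≤ P (Bevent X μ ε N) := by
    intro N
    rw [tsub_le_iff_right]
    calc (1 : ENNReal) = P Set.univ := measure_univ.symm
    _ = P ((Bevent X μ ε N) ∪ (Bevent X μ ε N)ᶜ) := by rw [Set.union_compl_self]
    _ ≤ P (Bevent X μ ε N) + P (Bevent X μ ε N)ᶜ := measure_union_le _ _
  have hlowlim : Tendsto (fun N => 1 - P (Bevent X μ ε N)ᶜ) atTop (nhds 1) := by
    have := ENNReal.Tendsto.sub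
      (tendsto_const_nhds : Tendsto (fun _ : ℕ => (1 : ENNReal)) atTop (nhds 1))
      hBclim (Or.inl ENNReal.one_ne_top)
    simpa using this
  exact tendsto_of_tendsto_of_tendsto_of_le_of_le hlowlim tendsto_const_nhds hlow
    (fun N => prob_le_one)
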